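/- Define h : ℝ → ℝ by h(ξ) = |cos ξ| + |sin ξ|. Fix λ > 0. Then there exists ρ > 0 such that: for every τ ∈ [0, ρ) the equation y · h(2τy²) = λ has a unique nonnegative solution y(τ); the map τ ↦ y(τ) is Lipschitz on [0, ρ) and differentiable on (0, ρ); y(0) = λ; and y(τ) → λ as τ → 0⁺. -/

import Mathlib

open Real Set Filter Topology

/-- The function `h(ξ) = |cos ξ| + |sin ξ|`. -/
noncomputable def h (ξ : ℝ) : ℝ := |Real.cos ξ| + |Real.sin ξ|

lemma h_ge_one (ξ : ℝ) : 1 ≤ h ξ := by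
  have h1 := Real.sin_sq_add_cos_sq ξ
  have h2 := Real.abs_cos_le_one ξ
  have h3 := Real.abs_sin_le_one ξ
  have h4 : Real.cos ξ ^ 2 = |Real.cos ξ| ^ 2 := (sq_abs _).symm
  have h5 : Real.sin ξ ^ 2 = |Real.sin ξ| ^ 2 := (sq_abs _).symm
  have h6 : 0 ≤ |Real.cos ξ| := abs_nonneg _
  have h7 : 0 ≤ |Real.sin ξ| := abs_nonneg _
  unfold h
  nlinarith

lemma h_le_two (ξ : ℝ) : h ξ ≤ 2 := by
  have h2 := Real.abs_cos_le_one ξ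
  have h3 := Real.abs_sin_le_one ξ
  unfold h; linarith

lemma abs_sin_le_abs' (x : ℝ) : |Real.sin x| ≤ |x| := by
  rcases eq_or_ne x 0 with rfl | hx
  · simp
  · exact (Real.abs_sin_lt_abs hx).le

lemma h_lip (a b : ℝ) : |h a - h b| ≤ 2 * |a - b| := by
  have habs2 : |(a - b) / 2| = |a - b| / 2 := by
    rw [abs_div]; norm_num
  have hs : |Real.sin a - Real.sin b| ≤ |a - b| := by
    rw [Real.sin_sub_sin, abs_mul, abs_mul, abs_two]
    have h1 : |Real.sin ((a - b) / 2)| ≤ |a - b| / 2 := habs2 ▸ abs_sin_le_abs' _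
    have h2 : |Real.cos ((a + b) / 2)| ≤ 1 := Real.abs_cos_le_one _
    nlinarith [abs_nonneg (Real.sin ((a - b) / 2)), abs_nonneg (Real.cos ((a + b) / 2)),
      abs_nonneg (a - b)]
  have hc : |Real.cos a - Real.cos b| ≤ |a - b| := by
    rw [Real.cos_sub_cos, abs_mul, abs_mul, abs_neg, abs_two]
    have h1 : |Real.sin ((a - b) / 2)| ≤ |a - b| / 2 := habs2 ▸ abs_sin_le_abs' _
    have h2 : |Real.sin ((a + b) / 2)| ≤ 1 := Real.abs_sin_le_one _
    nlinarith [abs_nonneg (Real.sin ((a - b) / 2)), abs_nonneg (Real.sin ((a + b) / 2)),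
      abs_nonneg (a - b)]
  have hc' : |(|Real.cos a| - |Real.cos b|)| ≤ |Real.cos a - Real.cos b| :=
    abs_abs_sub_abs_le_abs_sub _ _
  have hs' : |(|Real.sin a| - |Real.sin b|)| ≤ |Real.sin a - Real.sin b| :=
    abs_abs_sub_abs_le_abs_sub _ _
  have key : h a - h b = (|Real.cos a| - |Real.cos b|) + (|Real.sin a| - |Real.sin b|) := by
    unfold h; ring
  rw [key]
  calc |(|Real.cos a| - |Real.cos b|) + (|Real.sin a| - |Real.sin b|)|
      ≤ |(|Real.cos a| - |Real.cos b|)| + |(|Real.sin a| - |Real.sin b|)| := abs_add_le _ _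
    _ ≤ 2 * |a - b| := by linarith

lemma h_eq_of_mem (ξ : ℝ) (h0 : 0 ≤ ξ) (h2 : ξ ≤ Real.pi / 2) :
    h ξ = Real.cos ξ + Real.sin ξ := by
  have hπ := Real.pi_pos
  unfold h
  rw [abs_of_nonneg (Real.cos_nonneg_of_mem_Icc ⟨by linarith, h2⟩),
    abs_of_nonneg (Real.sin_nonneg_of_nonneg_of_le_pi h0 (by linarith))]

set_option maxHeartbeats 1600000 in
/-- For small times the implicit equation `y · h(2τy²) = λ` has a unique nonnegative
solution `y(τ)`, which is Lipschitz on `[0, ρ)`, differentiable on `(0, ρ)`, equals `λ`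
at `τ = 0` and tends to `λ` as `τ → 0⁺`. -/
theorem implicit_solution_small_time (lam : ℝ) (hlam : 0 < lam) :
    ∃ ρ > 0, ∃ y : ℝ → ℝ,
      (∀ τ ∈ Set.Ico (0 : ℝ) ρ,
        (0 ≤ y τ ∧ y τ * h (2 * τ * (y τ) ^ 2) = lam) ∧
        ∀ y' : ℝ, 0 ≤ y' → y' * h (2 * τ * y' ^ 2) = lam → y' = y τ) ∧
      (∃ K : NNReal, LipschitzOnWith K y (Set.Ico (0 : ℝ) ρ)) ∧
      DifferentiableOn ℝ y (Set.Ioo (0 : ℝ) ρ) ∧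
      y 0 = lam ∧
      Filter.Tendsto y (nhdsWithin 0 (Set.Ioi (0 : ℝ))) (nhds lam) := by
  set ρ : ℝ := 1 / (16 * lam ^ 2) with hρdef
  have hρ : 0 < ρ := by positivity
  -- strict monotonicity estimate
  have hmono : ∀ τ : ℝ, 0 ≤ τ → τ < ρ → ∀ y1 y2 : ℝ, 0 ≤ y1 → y1 ≤ y2 → y2 ≤ lam →
      (y2 - y1) / 2 ≤ y2 * h (2 * τ * y2 ^ 2) - y1 * h (2 * τ * y1 ^ 2) := by
    intro τ hτ0 hτρ y1 y2 hy10 h12 h2l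
    have hτ' : τ * (16 * lam ^ 2) < 1 := by
      rw [hρdef, lt_div_iff₀ (by positivity)] at hτρ; exact hτρ
    have hA : h (2 * τ * y1 ^ 2) - h (2 * τ * y2 ^ 2) ≤ 4 * τ * (y2 ^ 2 - y1 ^ 2) := by
      have hysq : y1 ^ 2 ≤ y2 ^ 2 := by nlinarith
      have hnn : (0 : ℝ) ≤ 2 * τ * y2 ^ 2 - 2 * τ * y1 ^ 2 := by
        nlinarith [mul_nonneg hτ0 (sub_nonneg.2 hysq)]
      have h1 := h_lip (2 * τ * y1 ^ 2) (2 * τ * y2 ^ 2)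
      have h2 : |2 * τ * y1 ^ 2 - 2 * τ * y2 ^ 2| = 2 * τ * (y2 ^ 2 - y1 ^ 2) := by
        rw [abs_sub_comm, abs_of_nonneg hnn]; ring
      calc h (2 * τ * y1 ^ 2) - h (2 * τ * y2 ^ 2) ≤ |h (2 * τ * y1 ^ 2) - h (2 * τ * y2 ^ 2)| :=
            le_abs_self _
        _ ≤ 2 * |2 * τ * y1 ^ 2 - 2 * τ * y2 ^ 2| := h1
        _ = 4 * τ * (y2 ^ 2 - y1 ^ 2) := by rw [h2]; ring
    have e1 : y1 * (h (2 * τ * y1 ^ 2) - h (2 * τ * y2 ^ 2)) ≤ y1 * (4 * τ * (y2 ^ 2 - y1 ^ 2)) :=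
      mul_le_mul_of_nonneg_left hA hy10
    have e2 : (y2 - y1) * 1 ≤ (y2 - y1) * h (2 * τ * y2 ^ 2) :=
      mul_le_mul_of_nonneg_left (h_ge_one _) (by linarith)
    have e3 : y1 * (4 * τ * (y2 ^ 2 - y1 ^ 2)) ≤ (y2 - y1) / 2 := by
      have hz : 0 ≤ τ * (y2 - y1) := mul_nonneg hτ0 (by linarith)
      have hb1 : y1 * (y2 + y1) ≤ 2 * lam ^ 2 := by nlinarith [sq_nonneg (lam - y1)]
      have h4 : 4 * (τ * (y2 - y1)) * (y1 * (y2 + y1)) ≤ 4 * (τ * (y2 - y1)) * (2 * lam ^ 2) :=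
        mul_le_mul_of_nonneg_left hb1 (by linarith)
      have h6 : 0 ≤ (1 - τ * (16 * lam ^ 2)) * (y2 - y1) :=
        mul_nonneg (by linarith) (by linarith)
      nlinarith [h4, h6]
    nlinarith [e1, e2, e3]
  -- existence via IVT
  have hconth : Continuous h := Real.continuous_cos.abs.add Real.continuous_sin.abs
  have hcontG : ∀ τ : ℝ, Continuous fun z : ℝ => z * h (2 * τ * z ^ 2) := by
    intro τ
    exact continuous_id.mul (hconth.comp ((continuous_const.mul (continuous_pow 2))))
  have hex : ∀ τ : ℝ, 0 ≤ τ → ∃ z ∈ Set.Icc (0 : ℝ) lam, z * h (2 * τ * z ^ 2) = lam := by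
    intro τ hτ
    have hsub := intermediate_value_Icc (le_of_lt hlam) ((hcontG τ).continuousOn)
    have hmem : lam ∈ Set.Icc ((0 : ℝ) * h (2 * τ * 0 ^ 2)) (lam * h (2 * τ * lam ^ 2)) := by
      constructor
      · simp [hlam.le]
      · exact le_mul_of_one_le_right hlam.le (h_ge_one _)
    obtain ⟨z, hz1, hz2⟩ := hsub hmem
    exact ⟨z, hz1, hz2⟩
  have hex' : ∀ τ : ℝ, ∃ z : ℝ, 0 ≤ τ → z ∈ Set.Icc (0 : ℝ) lam ∧ z * h (2 * τ * z ^ 2) = lam := by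
    intro τ
    by_cases hτ : 0 ≤ τ
    · obtain ⟨z, hz1, hz2⟩ := hex τ hτ
      exact ⟨z, fun _ => ⟨hz1, hz2⟩⟩
    · exact ⟨lam, fun c => absurd c hτ⟩
  choose y hy using hex'
  -- bound on any nonnegative solution
  have hbound : ∀ (τ y' : ℝ), 0 ≤ y' → y' * h (2 * τ * y' ^ 2) = lam → y' ≤ lam := by
    intro τ y' h0 he
    nlinarith [h_ge_one (2 * τ * y' ^ 2)]
  -- uniqueness on [0, lam]
  have huniq : ∀ τ : ℝ, 0 ≤ τ → τ < ρ → ∀ a b : ℝ, 0 ≤ a → a ≤ lam → 0 ≤ b → b ≤ lam →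
      a * h (2 * τ * a ^ 2) = lam → b * h (2 * τ * b ^ 2) = lam → a = b := by
    intro τ h0 hρ' a b ha0 hal hb0 hbl hae hbe
    rcases lt_trichotomy a b with hlt | heq | hgt
    · have := hmono τ h0 hρ' a b ha0 hlt.le hbl
      rw [hae, hbe] at this; linarith
    · exact heq
    · have := hmono τ h0 hρ' b a hb0 hgt.le hal
      rw [hae, hbe] at this; linarith
  have huniq' : ∀ τ ∈ Set.Ico (0 : ℝ) ρ, ∀ y' : ℝ, 0 ≤ y' →
      y' * h (2 * τ * y' ^ 2) = lam → y' = y τ := by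
    intro τ hτ y' h0 he
    obtain ⟨⟨hy0, hyl⟩, hye⟩ := hy τ hτ.1
    exact huniq τ hτ.1 hτ.2 y' (y τ) h0 (hbound τ y' h0 he) hy0 hyl he hye
  -- Lipschitz estimate
  have hlipy : ∀ τ1 ∈ Set.Ico (0 : ℝ) ρ, ∀ τ2 ∈ Set.Ico (0 : ℝ) ρ, y τ1 ≤ y τ2 →
      y τ2 - y τ1 ≤ 8 * lam ^ 3 * |τ1 - τ2| := by
    intro τ1 h1 τ2 h2 hle
    obtain ⟨⟨ha0, hal⟩, hae⟩ := hy τ1 h1.1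
    obtain ⟨⟨hb0, hbl⟩, hbe⟩ := hy τ2 h2.1
    have hm := hmono τ2 h2.1 h2.2 (y τ1) (y τ2) ha0 hle hbl
    rw [hbe] at hm
    have hd := h_lip (2 * τ1 * (y τ1) ^ 2) (2 * τ2 * (y τ1) ^ 2)
    have habs : |2 * τ1 * (y τ1) ^ 2 - 2 * τ2 * (y τ1) ^ 2| ≤ 2 * lam ^ 2 * |τ1 - τ2| := by
      have heq : 2 * τ1 * (y τ1) ^ 2 - 2 * τ2 * (y τ1) ^ 2 = (τ1 - τ2) * (2 * (y τ1) ^ 2) := by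
        ring
      rw [heq, abs_mul, abs_of_nonneg (by positivity : (0:ℝ) ≤ 2 * (y τ1) ^ 2)]
      have hsq : (y τ1) ^ 2 ≤ lam ^ 2 := by nlinarith
      nlinarith [abs_nonneg (τ1 - τ2)]
    have hAB : h (2 * τ1 * (y τ1) ^ 2) - h (2 * τ2 * (y τ1) ^ 2) ≤ 4 * lam ^ 2 * |τ1 - τ2| := by
      calc h (2 * τ1 * (y τ1) ^ 2) - h (2 * τ2 * (y τ1) ^ 2)
          ≤ |h (2 * τ1 * (y τ1) ^ 2) - h (2 * τ2 * (y τ1) ^ 2)| := le_abs_self _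
        _ ≤ 2 * |2 * τ1 * (y τ1) ^ 2 - 2 * τ2 * (y τ1) ^ 2| := hd
        _ ≤ 4 * lam ^ 2 * |τ1 - τ2| := by linarith
    have key : y τ1 * (h (2 * τ1 * (y τ1) ^ 2) - h (2 * τ2 * (y τ1) ^ 2))
        ≤ lam * (4 * lam ^ 2 * |τ1 - τ2|) := by
      calc y τ1 * (h (2 * τ1 * (y τ1) ^ 2) - h (2 * τ2 * (y τ1) ^ 2))
          ≤ y τ1 * (4 * lam ^ 2 * |τ1 - τ2|) := mul_le_mul_of_nonneg_left hAB ha0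
        _ ≤ lam * (4 * lam ^ 2 * |τ1 - τ2|) := by
            apply mul_le_mul_of_nonneg_right hal
            positivity
    nlinarith [hm, key, hae]
  have hK : (Real.toNNReal (8 * lam ^ 3) : ℝ) = 8 * lam ^ 3 :=
    Real.coe_toNNReal _ (by positivity)
  have hlipw : LipschitzOnWith (Real.toNNReal (8 * lam ^ 3)) y (Set.Ico (0 : ℝ) ρ) := by
    apply LipschitzOnWith.of_dist_le_mul
    intro τ1 h1 τ2 h2
    rw [Real.dist_eq, Real.dist_eq, hK]
    rcases le_total (y τ1) (y τ2) with hc | hc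
    · have := hlipy τ1 h1 τ2 h2 hc
      rw [abs_of_nonpos (by linarith)]
      linarith
    · have := hlipy τ2 h2 τ1 h1 hc
      rw [abs_sub_comm τ2 τ1] at this
      rw [abs_of_nonneg (by linarith)]
      linarith
  -- value at 0
  have hy0 : y 0 = lam := by
    have := huniq' 0 ⟨le_refl _, hρ⟩ lam hlam.le (by simp [h])
    exact this.symm
  -- the key identity T (y τ) = τ
  set T : ℝ → ℝ := fun z => (Real.arcsin (lam / Real.sqrt 2 * z⁻¹) - Real.pi / 4) * (2 * z ^ 2)⁻¹
    with hTdef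
  have hπ3 := Real.pi_gt_three
  have hkey : ∀ τ ∈ Set.Ioo (0 : ℝ) ρ, lam / 2 ≤ y τ ∧ 0 < 2 * τ * (y τ) ^ 2 ∧
      2 * τ * (y τ) ^ 2 ≤ 1 / 8 ∧
      Real.sin (2 * τ * (y τ) ^ 2 + Real.pi / 4) = lam / Real.sqrt 2 * (y τ)⁻¹ ∧
      T (y τ) = τ := by
    intro τ hτ
    obtain ⟨⟨hb0, hbl⟩, hbe⟩ := hy τ hτ.1.le
    set b := y τ with hb
    have hblow : lam / 2 ≤ b := by nlinarith [h_le_two (2 * τ * b ^ 2)]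
    have hbpos : 0 < b := lt_of_lt_of_le (by linarith) hblow
    set ξ := 2 * τ * b ^ 2 with hξ
    have hξpos : 0 < ξ := by
      rw [hξ]; exact mul_pos (mul_pos two_pos hτ.1) (pow_pos hbpos 2)
    have hτ' : τ * (16 * lam ^ 2) < 1 := by
      have := hτ.2
      rw [hρdef, lt_div_iff₀ (by positivity)] at this; exact this
    have hξle : ξ ≤ 1 / 8 := by
      rw [hξ]
      nlinarith [mul_le_mul_of_nonneg_left (pow_le_pow_left₀ hb0 hbl 2) hτ.1.le,
        mul_nonneg hτ.1.le (sq_nonneg b)]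
    have hξπ : ξ ≤ Real.pi / 2 := by linarith
    have hhe : h ξ = Real.cos ξ + Real.sin ξ := h_eq_of_mem ξ hξpos.le hξπ
    have hsq2 : Real.sqrt 2 * Real.sqrt 2 = 2 := Real.mul_self_sqrt (by norm_num)
    have hsq2pos : (0 : ℝ) < Real.sqrt 2 := by positivity
    have hsum : Real.cos ξ + Real.sin ξ = Real.sqrt 2 * Real.sin (ξ + Real.pi / 4) := by
      rw [Real.sin_add, Real.cos_pi_div_four, Real.sin_pi_div_four]
      linear_combination (-(Real.sin ξ + Real.cos ξ) / 2) * hsq2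
    have hsin : Real.sin (ξ + Real.pi / 4) = lam / Real.sqrt 2 * b⁻¹ := by
      have h2 : b * (Real.sqrt 2 * Real.sin (ξ + Real.pi / 4)) = lam := by
        rw [← hsum, ← hhe]; exact hbe
      have hdiv : lam / Real.sqrt 2 * b⁻¹ = lam / (Real.sqrt 2 * b) := by
        rw [div_eq_mul_inv, div_eq_mul_inv, mul_inv, mul_assoc]
      rw [hdiv, eq_div_iff (mul_pos hsq2pos hbpos).ne']
      linear_combination h2
    have harcsin : Real.arcsin (lam / Real.sqrt 2 * b⁻¹) = ξ + Real.pi / 4 := by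
      rw [← hsin, Real.arcsin_sin (by linarith) (by linarith)]
    refine ⟨hblow, hξpos, hξle, hsin, ?_⟩
    show (Real.arcsin (lam / Real.sqrt 2 * b⁻¹) - Real.pi / 4) * (2 * b ^ 2)⁻¹ = τ
    rw [harcsin]
    have he1 : ξ + Real.pi / 4 - Real.pi / 4 = ξ := by ring
    rw [he1, hξ]
    field_simp
  -- differentiability
  have hdiff : DifferentiableOn ℝ y (Set.Ioo (0 : ℝ) ρ) := by
    intro τ₀ hτ₀
    apply DifferentiableAt.differentiableWithinAt
    obtain ⟨hblow, hξpos, hξle, hsin, hTb⟩ := hkey τ₀ hτ₀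
    obtain ⟨⟨hb0, hbl⟩, hbe⟩ := hy τ₀ hτ₀.1.le
    set b := y τ₀ with hb
    have hbpos : 0 < b := lt_of_lt_of_le (by linarith) hblow
    have hsq2pos : (0 : ℝ) < Real.sqrt 2 := by positivity
    have hx₀pos : 0 < lam / Real.sqrt 2 * b⁻¹ :=
      mul_pos (div_pos hlam hsq2pos) (inv_pos.2 hbpos)
    have hx₀lt : lam / Real.sqrt 2 * b⁻¹ < 1 := by
      rw [← hsin]
      have hmem1 : 2 * τ₀ * b ^ 2 + Real.pi / 4 ∈ Set.Icc (-(Real.pi / 2)) (Real.pi / 2) := by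
        constructor <;> [linarith; linarith]
      have hmem2 : Real.pi / 2 ∈ Set.Icc (-(Real.pi / 2)) (Real.pi / 2) := by
        constructor <;> [linarith; linarith]
      have := Real.strictMonoOn_sin hmem1 hmem2 (by linarith)
      rwa [Real.sin_pi_div_two] at this
    have hx₀sq : 0 < 1 - (lam / Real.sqrt 2 * b⁻¹) ^ 2 := by nlinarith
    have hsqrtpos : 0 < Real.sqrt (1 - (lam / Real.sqrt 2 * b⁻¹) ^ 2) := Real.sqrt_pos.2 hx₀sq
    have hbb : (0 : ℝ) < 2 * b ^ 2 := mul_pos two_pos  (pow_pos hbpos 2)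
    -- build the derivative of T at b
    have hI : HasStrictDerivAt (fun z : ℝ => z⁻¹) (-(b ^ 2)⁻¹) b := hasStrictDerivAt_inv hbpos.ne'
    have hC : HasStrictDerivAt (fun z : ℝ => lam / Real.sqrt 2 * z⁻¹)
        (lam / Real.sqrt 2 * -(b ^ 2)⁻¹) b := hI.const_mul _
    have hA : HasStrictDerivAt (fun z : ℝ => Real.arcsin (lam / Real.sqrt 2 * z⁻¹))
        (1 / Real.sqrt (1 - (lam / Real.sqrt 2 * b⁻¹) ^ 2) * (lam / Real.sqrt 2 * -(b ^ 2)⁻¹)) b :=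
      by
        have hA0 := Real.hasStrictDerivAt_arcsin (x := lam / Real.sqrt 2 * b⁻¹) (ne_of_gt (by linarith)) hx₀lt.ne
        exact hA0.comp b hC
    have hSub : HasStrictDerivAt
        (fun z : ℝ => Real.arcsin (lam / Real.sqrt 2 * z⁻¹) - Real.pi / 4)
        (1 / Real.sqrt (1 - (lam / Real.sqrt 2 * b⁻¹) ^ 2) * (lam / Real.sqrt 2 * -(b ^ 2)⁻¹)) b :=
      hA.sub_const _
    have hpoly : HasStrictDerivAt (fun z : ℝ => 2 * z ^ 2) (4 * b) b := by
      have h' := (hasStrictDerivAt_pow 2 b).const_mul (2 : ℝ)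
      rw [show (4:ℝ) * b = 2 * (↑2 * b ^ (2 - 1)) by norm_num <;> ring]
      exact h'
    have hInv : HasStrictDerivAt (fun z : ℝ => (2 * z ^ 2)⁻¹)
        (-((2 * b ^ 2) ^ 2)⁻¹ * (4 * b)) b :=
      (hasStrictDerivAt_inv hbb.ne').comp b hpoly
    have hT' : HasStrictDerivAt T
        ((1 / Real.sqrt (1 - (lam / Real.sqrt 2 * b⁻¹) ^ 2) * (lam / Real.sqrt 2 * -(b ^ 2)⁻¹)) *
            (2 * b ^ 2)⁻¹ +
          (Real.arcsin (lam / Real.sqrt 2 * b⁻¹) - Real.pi / 4) *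
            (-((2 * b ^ 2) ^ 2)⁻¹ * (4 * b))) b :=
      hSub.mul hInv
    have harc : Real.arcsin (lam / Real.sqrt 2 * b⁻¹) - Real.pi / 4 = 2 * τ₀ * b ^ 2 := by
      rw [← hsin, Real.arcsin_sin (by linarith) (by linarith)]
      ring
    have hdneg : (1 / Real.sqrt (1 - (lam / Real.sqrt 2 * b⁻¹) ^ 2) *
          (lam / Real.sqrt 2 * -(b ^ 2)⁻¹)) * (2 * b ^ 2)⁻¹ +
        (Real.arcsin (lam / Real.sqrt 2 * b⁻¹) - Real.pi / 4) *
          (-((2 * b ^ 2) ^ 2)⁻¹ * (4 * b)) < 0 := by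
      rw [harc]
      have e1 : 0 < 1 / Real.sqrt (1 - (lam / Real.sqrt 2 * b⁻¹) ^ 2) := by positivity
      have e2 : lam / Real.sqrt 2 * -(b ^ 2)⁻¹ < 0 := by
        have : 0 < lam / Real.sqrt 2 * (b ^ 2)⁻¹ :=
          mul_pos (div_pos hlam hsq2pos) (inv_pos.2 (pow_pos hbpos 2))
        linarith
      have e3 : 0 < (2 * b ^ 2)⁻¹ := inv_pos.2 hbb
      have t1 : (1 / Real.sqrt (1 - (lam / Real.sqrt 2 * b⁻¹) ^ 2) *
          (lam / Real.sqrt 2 * -(b ^ 2)⁻¹)) * (2 * b ^ 2)⁻¹ < 0 :=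
        mul_neg_of_neg_of_pos (mul_neg_of_pos_of_neg e1 e2) e3
      have e5 : -((2 * b ^ 2) ^ 2)⁻¹ * (4 * b) < 0 := by
        have h45 : 0 < ((2 * b ^ 2) ^ 2)⁻¹ * (4 * b) :=
          mul_pos (inv_pos.2 (pow_pos hbb 2)) (by linarith)
        nlinarith [h45]
      have t2 : (2 * τ₀ * b ^ 2) * (-((2 * b ^ 2) ^ 2)⁻¹ * (4 * b)) < 0 :=
        mul_neg_of_pos_of_neg hξpos e5
      linarith
    clear_value b
    obtain ⟨d, hT'', hdneg'⟩ : ∃ d, HasStrictDerivAt T d b ∧ d < 0 := ⟨_, hT', hdneg⟩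
    have hdne : d ≠ 0 := ne_of_lt hdneg'
    -- local inverse of T
    have hφ : HasStrictDerivAt (hT''.localInverse T d b hdne) d⁻¹ (T b) :=
      hT''.to_localInverse hdne
    rw [hTb] at hφ
    have hcontb : ContinuousAt y τ₀ :=
      hlipw.continuousOn.continuousAt (Ico_mem_nhds hτ₀.1 hτ₀.2)
    have htendb : Filter.Tendsto y (𝓝 τ₀) (𝓝 b) := by rw [hb]; exact hcontb
    have hleft : ∀ᶠ z in 𝓝 b, hT''.localInverse T d b hdne (T z) = z :=
      (hT''.hasStrictFDerivAt_equiv hdne).eventually_left_inverse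
    have hev1 : ∀ᶠ τ in 𝓝 τ₀, hT''.localInverse T d b hdne (T (y τ)) = y τ :=
      htendb.eventually hleft
    have hev2 : ∀ᶠ τ in 𝓝 τ₀, T (y τ) = τ := by
      filter_upwards [Ioo_mem_nhds hτ₀.1 hτ₀.2] with τ hτ
      exact (hkey τ hτ).2.2.2.2
    have hev : y =ᶠ[𝓝 τ₀] hT''.localInverse T d b hdne := by
      filter_upwards [hev1, hev2] with τ e1 e2
      rw [e2] at e1
      exact e1.symm
    exact (HasStrictDerivAt.hasDerivAt hφ).differentiableAt.congr_of_eventuallyEq hev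
  refine ⟨ρ, hρ, y, ?_, ⟨_, hlipw⟩, hdiff, hy0, ?_⟩
  · intro τ hτ
    exact ⟨⟨(hy τ hτ.1).1.1, (hy τ hτ.1).2⟩, huniq' τ hτ⟩
  · have htends : Filter.Tendsto y (nhdsWithin 0 (Set.Ico (0 : ℝ) ρ)) (nhds lam) := by
      have hc := hlipw.continuousOn 0 ⟨le_refl _, hρ⟩
      rw [ContinuousWithinAt, hy0] at hc
      exact hc
    refine htends.mono_left (nhdsWithin_le_of_mem ?_)
    exact mem_nhdsWithin.2 ⟨Set.Iio ρ, isOpen_Iio, hρ, fun x hx => ⟨le_of_lt hx.2, hx.1⟩⟩
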